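/- Let a ≥ b ≥ 2, n = a+b+1, and I = i_1⋯i_z ∈ W_> (all parts ≥ 2, i_1 > i_p − s). Then D_I = i_1 − 2 − (i_p − s) + e_2(i_p − s, i_{p+1}, …, i_q, t) ≥ i_1 − 2 ≥ 0. If moreover q ≥ p+1, then: (1) if the modulus of R_I equals a (i.e. s = i_p), then i_1 ≥ 3 and D_I ≥ 2i_1 − 3; (2) otherwise i_1 ≥ 4 and D_I ≥ i_1 + 2. -/

import Mathlib

open scoped Classical
open MvPolynomial Finset

noncomputable section

/-- `σ⁺_I(a)`: the minimal partial sum of `I` that is at least `a`. -/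
def sigmaP (I : List ℕ) (a : ℝ) : ℝ :=
  sInf {x : ℝ | ∃ k ≤ I.length, x = ((I.take k).sum : ℝ) ∧ a ≤ x}

/-- `Θ⁺_I(a) = σ⁺_I(a) − a`. -/
def thetaP (I : List ℕ) (a : ℝ) : ℝ := sigmaP I a - a

/-- `σ⁻_I(a)`: the maximal partial sum of `I` that is at most `a`. -/
def sigmaM (I : List ℕ) (a : ℝ) : ℝ :=
  sSup {x : ℝ | ∃ k ≤ I.length, x = ((I.take k).sum : ℝ) ∧ x ≤ a}

/-- `Θ⁻_I(a) = a − σ⁻_I(a)`. -/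
def thetaM (I : List ℕ) (a : ℝ) : ℝ := a - sigmaM I a

/-- `w_I = i₁(i₂−1)⋯(i_z−1)`. -/
def wI : List ℕ → ℕ
  | [] => 1
  | i :: t => i * (t.map (· - 1)).prod

/-- `e_I`: the product of elementary symmetric polynomials indexed by the parts of `I`,
in `N` variables. -/
def eComp (N : ℕ) (I : List ℕ) : MvPolynomial (Fin N) ℝ :=
  (I.map fun i => MvPolynomial.esymm (Fin N) ℝ i).prod

/-- The chromatic symmetric function of a graph, truncated to `N` variables. -/
def csf {V : Type} [Fintype V] (G : SimpleGraph V) (N : ℕ) : MvPolynomial (Fin N) ℝ :=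
  ∑ κ : V → Fin N,
    if ∀ u v, G.Adj u v → κ u ≠ κ v then ∏ v, MvPolynomial.X (κ v) else 0

/-- Add a single edge `uv` to a graph. -/
def addE {V : Type} (G : SimpleGraph V) (u v : V) : SimpleGraph V :=
  G ⊔ SimpleGraph.fromRel fun x y => x = u ∧ y = v

/-- The list of consecutive pairs of a list of vertices. -/
def chainE (l : List ℕ) : List (ℕ × ℕ) := l.zip l.tail

/-- The simple graph on `Fin n` with the given list of edges. -/
def graphOfEdges (n : ℕ) (E : List (ℕ × ℕ)) : SimpleGraph (Fin n) :=
  SimpleGraph.fromRel fun u v => ((u : ℕ), (v : ℕ)) ∈ E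

/-- The path on `n` vertices. -/
def pathG (n : ℕ) : SimpleGraph (Fin n) := graphOfEdges n (chainE (List.range n))

/-- The cycle on `n` vertices. -/
def cycleG (n : ℕ) : SimpleGraph (Fin n) :=
  graphOfEdges n (chainE (List.range n ++ [0]))

/-- The tadpole `C_a^l`: a cycle on `a` vertices with a path of `l` edges attached. -/
def tadpoleG (a l : ℕ) : SimpleGraph (Fin (a + l)) :=
  graphOfEdges (a + l)
    (chainE (List.range a ++ [0]) ++ chainE (0 :: (List.range l).map (· + a)))

/-- The theta graph `θ_{abc}`: two vertices (`0` and `a+b+c-2`) joined by three internally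
disjoint paths of lengths `a`, `b`, `c`. -/
def thetaG (a b c : ℕ) : SimpleGraph (Fin (a + b + c - 1)) :=
  graphOfEdges (a + b + c - 1)
    (chainE (0 :: ((List.range (a - 1)).map (· + 1) ++ [a + b + c - 2])) ++
     chainE (0 :: ((List.range (b - 1)).map (· + a) ++ [a + b + c - 2])) ++
     chainE (0 :: ((List.range (c - 1)).map (· + (a + b - 1)) ++ [a + b + c - 2])))

/-- The index `p` defined by `m = i₁ + ⋯ + i_{p-1} + s` with `1 ≤ s ≤ i_p`:
the least `k` with `i₁ + ⋯ + i_k ≥ m`. -/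
def pIdx (I : List ℕ) (m : ℕ) : ℕ := sInf {k | m ≤ (I.take k).sum}

/-- The number `s` defined by `m = i₁ + ⋯ + i_{p-1} + s` with `1 ≤ s ≤ i_p`. -/
def sVal (I : List ℕ) (m : ℕ) : ℕ := m - (I.take (pIdx I m - 1)).sum

/-- The index `q` defined by `m = i₂ + ⋯ + i_q + t` with `1 ≤ t ≤ i_{q+1}`
(convention `i_{z+1} = i₁`). -/
def qIdx (I : List ℕ) (m : ℕ) : ℕ := sInf {k | m ≤ ((I.tail ++ I.take 1).take k).sum}

/-- The number `t` defined by `m = i₂ + ⋯ + i_q + t` with `1 ≤ t ≤ i_{q+1}`. -/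
def tVal (I : List ℕ) (m : ℕ) : ℕ := m - ((I.tail ++ I.take 1).take (qIdx I m - 1)).sum

/-- The part `i_p`. -/
def ipPart (I : List ℕ) (m : ℕ) : ℕ := I.getD (pIdx I m - 1) 0

/-- The second elementary symmetric polynomial evaluated on a list. -/
def e2 : List ℕ → ℤ
  | [] => 0
  | x :: t => (x : ℤ) * t.sum + e2 t

/-- The cycle-chord coefficient `Δ_I(m)`. -/
def DeltaI (I : List ℕ) (m : ℕ) : ℤ :=
  if (I.headI : ℤ) ≤ (ipPart I m : ℤ) - sVal I m then
    (sVal I m : ℤ) * ((ipPart I m : ℤ) - sVal I m - I.headI)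
  else
    e2 ((ipPart I m - sVal I m) ::
        ((I.drop (pIdx I m)).take (qIdx I m - pIdx I m) ++ [tVal I m]))

/-- The length of the prefix `P` in the decomposition `I = PQ`, where `Q` is the shortest
suffix of `I` with `|Q| ≥ a`. -/
def kPhi (a : ℕ) (I : List ℕ) : ℕ := sSup {j | j ≤ I.length ∧ a ≤ (I.drop j).sum}

/-- The transformation `φ`: writing `I = PQ` with `Q` the shortest suffix of modulus `≥ a`,
`φ(I) = I` if `Q = I`, and otherwise `φ(I) = i₁ · reverse(P∖i₁) · Q`. -/
def phi (a : ℕ) (I : List ℕ) : List ℕ :=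
  if kPhi a I = 0 then I
  else I.take 1 ++ ((I.drop 1).take (kPhi a I - 1)).reverse ++ I.drop (kPhi a I)

/-- The starting position of the longest suffix `R_I` of `I` of modulus `≤ a`. -/
def rIdx (a : ℕ) (I : List ℕ) : ℕ := sInf {j | (I.drop j).sum ≤ a}

/-- The partial reversal `ψ(I) = reverse(L_I) R_I`, where `R_I` is the longest suffix of `I`
of modulus `≤ a` and `L_I` is the complementary prefix. -/
def psi (a : ℕ) (I : List ℕ) : List ℕ :=
  (I.take (rIdx a I)).reverse ++ I.drop (rIdx a I)

/-- The clock coefficient `D_I = Θ⁺_I(2) − Θ⁻_{reverse(φ(I))}(a) + Δ_I(b+1)`. -/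
def DI (a b : ℕ) (I : List ℕ) : ℝ :=
  thetaP I 2 - thetaM (phi a I).reverse a + (DeltaI I (b + 1) : ℝ)

end


-- ===== auxiliary lemmas =====

lemma aux_sum_take_mono (l : List ℕ) {k k' : ℕ} (h : k ≤ k') :
    (l.take k).sum ≤ (l.take k').sum := by
  have he : l.take k = (l.take k').take k := by rw [List.take_take, min_eq_left h]
  rw [he]
  calc ((l.take k').take k).sum ≤ ((l.take k').take k).sum + ((l.take k').drop k).sum :=
        Nat.le_add_right _ _
    _ = (l.take k').sum := List.sum_take_add_sum_drop _ _

lemma aux_sum_take_reverse (u : List ℕ) (k : ℕ) :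
    (u.reverse.take k).sum = (u.drop (u.length - k)).sum := by
  rw [List.take_reverse, List.sum_reverse]

lemma aux_e2_cons (x : ℕ) (L : List ℕ) : e2 (x :: L) = (x : ℤ) * L.sum + e2 L := rfl

lemma aux_e2_nonneg (L : List ℕ) : 0 ≤ e2 L := by
  induction L with
  | nil => simp [e2]
  | cons x t ih => rw [aux_e2_cons]; positivity

lemma aux_e2_ge (x : ℕ) (L : List ℕ) (hx : 1 ≤ x) (hL : 1 ≤ L.sum) :
    ((x::L).sum : ℤ) - 1 ≤ e2 (x :: L) := by
  rw [aux_e2_cons, List.sum_cons]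
  have h1 : (1:ℤ) ≤ x := by exact_mod_cast hx
  have h2 : (1:ℤ) ≤ L.sum := by exact_mod_cast hL
  have := aux_e2_nonneg L
  push_cast
  nlinarith

lemma aux_sum_ge_two (L : List ℕ) (hne : L ≠ []) (h2 : ∀ i ∈ L, 2 ≤ i) : 2 ≤ L.sum := by
  match L, hne with
  | x :: t, _ =>
    have := h2 x (by simp)
    simp only [List.sum_cons]; omega

lemma aux_sum_drop_anti (l : List ℕ) {j j' : ℕ} (h : j ≤ j') :
    (l.drop j').sum ≤ (l.drop j).sum := by
  have h1 := List.sum_take_add_sum_drop l j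
  have h2 := List.sum_take_add_sum_drop l j'
  have := aux_sum_take_mono l h
  omega

lemma aux_sigmaM_eq (J : List ℕ) (a v : ℕ) (hv : v ≤ a)
    (hmem : ∃ k ≤ J.length, (J.take k).sum = v)
    (hub : ∀ k ≤ J.length, (J.take k).sum ≤ a → (J.take k).sum ≤ v) :
    sigmaM J a = (v : ℝ) := by
  unfold sigmaM
  obtain ⟨k0, hk0, hk0v⟩ := hmem
  have hmem' : (v : ℝ) ∈ {x : ℝ | ∃ k ≤ J.length, x = ((J.take k).sum : ℝ) ∧ x ≤ (a:ℕ)} :=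
    ⟨k0, hk0, by exact_mod_cast hk0v.symm, by exact_mod_cast hv⟩
  apply le_antisymm
  · apply csSup_le ⟨_, hmem'⟩
    rintro w ⟨k, hk, rfl, hwa⟩
    have : (J.take k).sum ≤ a := by exact_mod_cast hwa
    exact_mod_cast hub k hk this
  · apply le_csSup _ hmem'
    exact ⟨(a : ℝ), by rintro w ⟨k, hk, rfl, hwa⟩; exact hwa⟩

lemma aux_sigmaP_eq (J : List ℕ) (a v : ℕ) (hv : a ≤ v)
    (hmem : ∃ k ≤ J.length, (J.take k).sum = v)
    (hlb : ∀ k ≤ J.length, a ≤ (J.take k).sum → v ≤ (J.take k).sum) :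
    sigmaP J a = (v : ℝ) := by
  unfold sigmaP
  obtain ⟨k0, hk0, hk0v⟩ := hmem
  have hmem' : (v : ℝ) ∈ {x : ℝ | ∃ k ≤ J.length, x = ((J.take k).sum : ℝ) ∧ (a:ℕ) ≤ x} :=
    ⟨k0, hk0, by exact_mod_cast hk0v.symm, by exact_mod_cast hv⟩
  apply le_antisymm
  · apply csInf_le _ hmem'
    exact ⟨(a : ℝ), by rintro w ⟨k, hk, rfl, hwa⟩; exact hwa⟩
  · apply le_csInf ⟨_, hmem'⟩
    rintro w ⟨k, hk, rfl, hwa⟩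
    have : a ≤ (J.take k).sum := by exact_mod_cast hwa
    exact_mod_cast hlb k hk this

lemma aux_e2_ge' (L : List ℕ) (h : ∀ y ∈ L, 1 ≤ y) (hlen : 2 ≤ L.length) :
    (L.sum : ℤ) - 1 ≤ e2 L := by
  match L, hlen with
  | x :: y :: M, _ =>
    apply aux_e2_ge
    · exact h x (by simp)
    · have := h y (by simp)
      simp only [List.sum_cons]; omega

set_option maxHeartbeats 2000000 in
theorem stmt14 (a b n : ℕ) (h2 : 2 ≤ b) (hba : b ≤ a) (hn : n = a + b + 1)
    (I : Composition n) (hW : ∀ i ∈ I.blocks, 2 ≤ i)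
    (hgt : (ipPart I.blocks (b + 1) : ℤ) - sVal I.blocks (b + 1) < I.blocks.headI) :
    (DI a b I.blocks
        = (I.blocks.headI : ℝ) - 2
          - ((ipPart I.blocks (b + 1) : ℝ) - sVal I.blocks (b + 1))
          + (e2 ((ipPart I.blocks (b + 1) - sVal I.blocks (b + 1)) ::
              ((I.blocks.drop (pIdx I.blocks (b + 1))).take
                  (qIdx I.blocks (b + 1) - pIdx I.blocks (b + 1))
                ++ [tVal I.blocks (b + 1)])) : ℝ)) ∧
    (I.blocks.headI : ℝ) - 2 ≤ DI a b I.blocks ∧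
    0 ≤ (I.blocks.headI : ℝ) - 2 ∧
    (pIdx I.blocks (b + 1) + 1 ≤ qIdx I.blocks (b + 1) →
      ((sVal I.blocks (b + 1) = ipPart I.blocks (b + 1) →
          3 ≤ I.blocks.headI ∧
          2 * (I.blocks.headI : ℝ) - 3 ≤ DI a b I.blocks) ∧
       (sVal I.blocks (b + 1) ≠ ipPart I.blocks (b + 1) →
          4 ≤ I.blocks.headI ∧
          (I.blocks.headI : ℝ) + 2 ≤ DI a b I.blocks))) := by
  set l := I.blocks with hldef
  set m := b + 1 with hmdef
  have hsum : l.sum = n := I.blocks_sum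
  have hne : l ≠ [] := by
    intro h; rw [h] at hsum; simp at hsum; omega
  obtain ⟨i1, tl, hcons⟩ := List.exists_cons_of_ne_nil hne
  have hlen1 : 1 ≤ l.length := by rw [hcons]; simp
  have hhead : l.headI = i1 := by rw [hcons]; rfl
  have htake1 : l.take 1 = [i1] := by rw [hcons]; rfl
  have hi1 : 2 ≤ i1 := hW i1 (by rw [hcons]; simp)
  have hma : 1 ≤ m ∧ m ≤ n ∧ a + m = n ∧ 2 ≤ a := by omega
  -- ===== p facts =====
  set p := pIdx l m with hpdef
  have hSp : l.length ∈ {k | m ≤ (l.take k).sum} := by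
    simp only [Set.mem_setOf_eq, List.take_length, hsum]; omega
  have hpmem : m ≤ (l.take p).sum := Nat.sInf_mem (⟨l.length, hSp⟩ : Set.Nonempty _)
  have hple : p ≤ l.length := Nat.sInf_le hSp
  have hp1 : 1 ≤ p := by
    rcases Nat.eq_zero_or_pos p with h | h
    · exfalso; rw [h] at hpmem; simp at hpmem
    · exact h
  have hpprev : (l.take (p - 1)).sum < m := by
    by_contra hc
    push_neg at hc
    have : p ≤ p - 1 := Nat.sInf_le hc
    omega
  have hplt : p - 1 < l.length := by omega
  have hipdef : ipPart l m = l[p-1] := by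
    unfold ipPart; rw [← hpdef, List.getD_eq_getElem l 0 hplt]
  set ip := ipPart l m with hipd
  have hip2 : 2 ≤ ip := by rw [hipdef]; exact hW _ (List.getElem_mem hplt)
  have htakep : (l.take p).sum = (l.take (p-1)).sum + ip := by
    rw [hipdef]
    have := List.sum_take_succ l (p-1) hplt
    have hp' : p - 1 + 1 = p := by omega
    rw [hp'] at this
    exact this
  set s := sVal l m with hsd
  have hsval : s = m - (l.take (p-1)).sum := by rw [hsd]; unfold sVal; rw [← hpdef]
  have hs1 : 1 ≤ s := by omega
  have hs : s + (l.take (p-1)).sum = m := by omega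
  have hsip : s ≤ ip := by omega
  set x := ip - s with hxd
  have hxs : x + s = ip := by omega
  have hxm : x + m = (l.take p).sum := by omega
  have hv : (l.drop p).sum + x = a := by
    have := List.sum_take_add_sum_drop l p
    omega
  -- ===== q facts =====
  set l' := l.tail ++ l.take 1 with hl'def
  have hl' : l' = tl ++ [i1] := by rw [hl'def, hcons]; rfl
  have hl'len : l'.length = l.length := by rw [hl', hcons]; simp
  have hl'sum : l'.sum = n := by
    rw [hl', List.sum_append]
    have : l.sum = i1 + tl.sum := by rw [hcons]; simp
    simp only [List.sum_cons, List.sum_nil]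
    omega
  set q := qIdx l m with hqdef
  have hSq : l'.length ∈ {k | m ≤ (l'.take k).sum} := by
    simp only [Set.mem_setOf_eq, List.take_length, hl'sum]; omega
  have hqmem : m ≤ (l'.take q).sum := by
    have := Nat.sInf_mem (⟨l'.length, hSq⟩ : Set.Nonempty {k | m ≤ (l'.take k).sum})
    rw [hqdef]; unfold qIdx; rw [← hl'def]; exact this
  have hqle : q ≤ l.length := by
    rw [← hl'len]
    rw [hqdef]; unfold qIdx; rw [← hl'def]
    exact Nat.sInf_le hSq
  have hq1 : 1 ≤ q := by
    rcases Nat.eq_zero_or_pos q with h | h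
    · exfalso; rw [h] at hqmem; simp at hqmem
    · exact h
  have hqprev : (l'.take (q - 1)).sum < m := by
    by_contra hc
    push_neg at hc
    have : q ≤ q - 1 := by
      rw [hqdef]; unfold qIdx; rw [← hl'def]; exact Nat.sInf_le hc
    omega
  set t := tVal l m with htd
  have htval : t = m - (l'.take (q-1)).sum := by
    rw [htd]; unfold tVal; rw [← hqdef, ← hl'def]
  have ht1 : 1 ≤ t := by omega
  have ht : t + (l'.take (q-1)).sum = m := by omega
  have hrot : (l'.take (q-1)).sum + i1 = (l.take q).sum := by
    have hq1' : q - 1 ≤ tl.length := by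
      rw [hcons] at hqle; simp at hqle; omega
    have e1 : l'.take (q-1) = tl.take (q-1) := by
      rw [hl']; exact List.take_append_of_le_length hq1'
    have e2' : l.take q = i1 :: tl.take (q-1) := by
      conv_lhs => rw [hcons, show q = (q-1)+1 by omega]
      rw [List.take_succ_cons]
    rw [e1, e2', List.sum_cons]
    omega
  have hkey : t + (l.take q).sum = m + i1 := by omega
  clear_value l m p s ip x l' q t
  -- ===== k0 facts =====
  set k0 := kPhi a l with hk0def
  have hSK : (0 : ℕ) ∈ {j | j ≤ l.length ∧ a ≤ (l.drop j).sum} := by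
    constructor
    · exact Nat.zero_le _
    · simp only [List.drop_zero, hsum]; omega
  have hSKbdd : BddAbove {j | j ≤ l.length ∧ a ≤ (l.drop j).sum} :=
    ⟨l.length, fun j hj => hj.1⟩
  have hk0mem : k0 ≤ l.length ∧ a ≤ (l.drop k0).sum := by
    have := Nat.sSup_mem (⟨0, hSK⟩ : Set.Nonempty _) hSKbdd
    rw [hk0def]; unfold kPhi; exact this
  have hk0max : ∀ j, j ≤ l.length → a ≤ (l.drop j).sum → j ≤ k0 := by
    intro j h1 h3
    rw [hk0def]; unfold kPhi
    exact le_csSup hSKbdd ⟨h1, h3⟩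
  clear_value k0
  have hjgt : ∀ j, k0 < j → (l.drop j).sum < a := by
    intro j hj
    by_contra hc
    push_neg at hc
    rcases le_or_gt j l.length with h | h
    · exact absurd (hk0max j h hc) (by omega)
    · rw [List.drop_eq_nil_of_le (le_of_lt h)] at hc
      simp at hc; omega
  have hk0lt : k0 < l.length := by
    rcases lt_or_ge k0 l.length with h | h
    · exact h
    · exfalso
      have := hk0mem.2
      rw [List.drop_eq_nil_of_le h] at this
      simp at this; omega
  -- k0 vs p
  have hdropp1 : (l.drop (p-1)).sum = a + s := by
    have := List.sum_take_add_sum_drop l (p-1)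
    omega
  have hk0cases : (x = 0 ∧ k0 = p) ∨ (1 ≤ x ∧ k0 = p - 1) := by
    rcases Nat.eq_zero_or_pos x with hx0 | hx0
    · left
      refine ⟨hx0, le_antisymm ?_ (hk0max p hple (by omega))⟩
      by_contra hc
      push_neg at hc
      have h1 : (l.drop (p+1)).sum < (l.drop p).sum := by
        have hplen : p < l.length := by omega
        have h2 := List.sum_take_succ l p hplen
        have h3 := List.sum_take_add_sum_drop l p
        have h4 := List.sum_take_add_sum_drop l (p+1)
        have h5 : 2 ≤ l[p] := hW _ (List.getElem_mem hplen)
        omega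
      have h6 : (l.drop k0).sum ≤ (l.drop (p+1)).sum := aux_sum_drop_anti l (by omega)
      have := hk0mem.2
      omega
    · right
      refine ⟨hx0, le_antisymm ?_ (hk0max (p-1) (by omega) (by omega))⟩
      by_contra hc
      push_neg at hc
      have h6 : (l.drop k0).sum ≤ (l.drop p).sum := aux_sum_drop_anti l (by omega)
      have := hk0mem.2
      omega
  have hk0p : k0 ≤ p ∧ p ≤ k0 + 1 := by rcases hk0cases with ⟨_, h⟩ | ⟨_, h⟩ <;> omega
  -- ===== sigmaM =====
  have hsigmaM : sigmaM ((phi a l).reverse) a = (((l.drop p).sum : ℕ) : ℝ) := by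
    apply aux_sigmaM_eq _ _ _ (by omega)
    case hmem =>
      rcases Nat.eq_zero_or_pos k0 with hk00 | hk00
      · -- phi = l
        have hphi0 : phi a l = l := by unfold phi; rw [← hk0def, if_pos hk00]
        have hp1' : p = 1 := by omega
        refine ⟨l.length - 1, ?_, ?_⟩
        · rw [hphi0, List.length_reverse]; omega
        · rw [hphi0, aux_sum_take_reverse]
          have : l.length - (l.length - 1) = p := by omega
          rw [this]
      · have hphi : phi a l = l.take 1 ++ ((l.drop 1).take (k0-1)).reverse ++ l.drop k0 := by
          unfold phi; rw [← hk0def, if_neg (by omega)]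
        have hJ : (phi a l).reverse
            = (l.drop k0).reverse ++ ((l.drop 1).take (k0-1) ++ [i1]) := by
          rw [hphi, htake1]
          simp [List.reverse_append]
        have hlenA : ((l.drop k0).reverse).length = l.length - k0 := by simp
        refine ⟨l.length - p, ?_, ?_⟩
        · rw [hJ, List.length_append, hlenA]; omega
        · rw [hJ, List.take_append_of_le_length (by rw [hlenA]; omega)]
          rw [aux_sum_take_reverse, List.length_drop, List.drop_drop]
          have hidx : k0 + (l.length - k0 - (l.length - p)) = p := by omega
          rw [hidx]
    case hub =>
      intro k hk hwa
      rcases Nat.eq_zero_or_pos k0 with hk00 | hk00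
      · have hphi0 : phi a l = l := by unfold phi; rw [← hk0def, if_pos hk00]
        have hp1' : p = 1 := by omega
        rw [hphi0, aux_sum_take_reverse] at hwa ⊢
        rcases Nat.eq_zero_or_pos (l.length - k) with h0 | h0
        · exfalso; rw [h0] at hwa; simp only [List.drop_zero, hsum] at hwa; omega
        · exact aux_sum_drop_anti l (by omega)
      · have hphi : phi a l = l.take 1 ++ ((l.drop 1).take (k0-1)).reverse ++ l.drop k0 := by
          unfold phi; rw [← hk0def, if_neg (by omega)]
        have hJ : (phi a l).reverse
            = (l.drop k0).reverse ++ ((l.drop 1).take (k0-1) ++ [i1]) := by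
          rw [hphi, htake1]
          simp [List.reverse_append]
        have hlenA : ((l.drop k0).reverse).length = l.length - k0 := by simp
        rw [hJ] at hwa ⊢
        rcases le_or_gt k (l.length - k0) with hkA | hkA
        · rw [List.take_append_of_le_length (by rw [hlenA]; omega)] at hwa ⊢
          rw [aux_sum_take_reverse, List.length_drop, List.drop_drop] at hwa ⊢
          rcases le_or_gt p (k0 + (l.length - k0 - k)) with hpj | hpj
          · exact aux_sum_drop_anti l hpj
          · rcases hk0cases with ⟨hx0, hkp⟩ | ⟨hx1, hkp⟩
            · omega
            · exfalso
              have hj : k0 + (l.length - k0 - k) = p - 1 := by omega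
              rw [hj, hdropp1] at hwa
              omega
        · exfalso
          rw [List.take_append, List.sum_append] at hwa
          have hA : (((l.drop k0).reverse).take k).sum = (l.drop k0).sum := by
            rw [List.take_of_length_le (by rw [hlenA]; omega), List.sum_reverse]
          have hBel : ∀ y ∈ (l.drop 1).take (k0-1) ++ [i1], 2 ≤ y := by
            intro y hy
            rcases List.mem_append.1 hy with h | h
            · exact hW y (List.mem_of_mem_drop (List.mem_of_mem_take h))
            · simp only [List.mem_singleton] at h; subst h; exact hi1
          have hBt : ((l.drop 1).take (k0-1) ++ [i1]).take (k - ((l.drop k0).reverse).length)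
              ≠ [] := by
            intro hc
            have hc' := congrArg List.length hc
            simp only [List.length_take, List.length_append, List.length_nil] at hc'
            rw [hlenA] at hc'
            simp at hc'
            omega
          have h2B : 2 ≤ (((l.drop 1).take (k0-1) ++ [i1]).take
              (k - ((l.drop k0).reverse).length)).sum :=
            aux_sum_ge_two _ hBt (fun y hy => hBel y (List.mem_of_mem_take hy))
          have := hk0mem.2
          omega
  -- ===== sigmaP =====
  have hsigmaP : sigmaP l 2 = ((i1 : ℕ) : ℝ) := by
    rw [show (2:ℝ) = ((2:ℕ):ℝ) by norm_num]
    apply aux_sigmaP_eq l 2 i1 hi1 ⟨1, hlen1, by rw [htake1]; simp⟩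
    intro k hk h2k
    rcases Nat.eq_zero_or_pos k with h | h
    · exfalso; rw [h] at h2k; simp at h2k
    · calc i1 = (l.take 1).sum := by rw [htake1]; simp
        _ ≤ (l.take k).sum := aux_sum_take_mono l h
  have hThetaP : thetaP l 2 = (i1 : ℝ) - 2 := by unfold thetaP; rw [hsigmaP]
  have hThetaM : thetaM ((phi a l).reverse) (a : ℝ) = (x : ℝ) := by
    unfold thetaM; rw [hsigmaM]
    have hc : ((l.drop p).sum : ℝ) + (x : ℝ) = (a : ℝ) := by exact_mod_cast hv
    linarith only [hc]
  have hDelta : DeltaI l m = e2 (x :: ((l.drop p).take (q - p) ++ [t])) := by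
    unfold DeltaI
    rw [← hpdef, ← hqdef, ← hsd, ← htd, ← hipd, ← hxd]
    rw [if_neg (not_le.mpr hgt)]
  have hDI : DI a b l = (i1 : ℝ) - 2 - (x : ℝ)
      + ((e2 (x :: ((l.drop p).take (q - p) ++ [t])) : ℤ) : ℝ) := by
    unfold DI
    rw [← hmdef, hThetaP, hThetaM, hDelta]
  have hxcast : (x : ℝ) = (ip : ℝ) - (s : ℝ) := by
    rw [hxd]; exact Nat.cast_sub hsip
  refine ⟨?_, ?_, ?_, ?_⟩
  · rw [hDI, hhead, hxcast]
  · rw [hDI, hhead]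
    have hZ : (x : ℤ) ≤ e2 (x :: ((l.drop p).take (q - p) ++ [t])) := by
      rw [aux_e2_cons]
      have h1 : (1:ℤ) ≤ (((l.drop p).take (q - p) ++ [t]).sum : ℤ) := by
        have h1' : 1 ≤ ((l.drop p).take (q - p) ++ [t]).sum := by
          rw [List.sum_append, List.sum_cons, List.sum_nil]; omega
        exact_mod_cast h1'
      have h2' := aux_e2_nonneg ((l.drop p).take (q - p) ++ [t])
      have hx0 : (0:ℤ) ≤ (x:ℤ) := Int.natCast_nonneg x
      have hmul := mul_le_mul_of_nonneg_left h1 hx0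
      linarith only [hmul, h2']
    have hZ' : (x : ℝ) ≤ ((e2 (x :: ((l.drop p).take (q - p) ++ [t])) : ℤ) : ℝ) := by
      exact_mod_cast hZ
    linarith only [hZ']
  · rw [hhead]
    have : (2:ℝ) ≤ (i1:ℝ) := by exact_mod_cast hi1
    linarith only [this]
  · intro hqp
    have hplen : p < l.length := by omega
    have hsegtake : l.take q = l.take p ++ (l.drop p).take (q - p) := by
      conv_lhs => rw [show q = p + (q - p) by omega]
      exact List.take_add
    have hsegsum : (l.take p).sum + ((l.drop p).take (q - p)).sum = (l.take q).sum := by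
      rw [hsegtake, List.sum_append]
    have hi1eq : x + (((l.drop p).take (q - p)).sum + t) = i1 := by omega
    have hsegne : (l.drop p).take (q - p) ≠ [] := by
      intro hc
      have hc' := congrArg List.length hc
      simp only [List.length_take, List.length_drop, List.length_nil] at hc'
      omega
    have hseg2 : 2 ≤ ((l.drop p).take (q - p)).sum :=
      aux_sum_ge_two _ hsegne
        (fun y hy => hW y (List.mem_of_mem_drop (List.mem_of_mem_take hy)))
    have hLel : ∀ y ∈ (l.drop p).take (q - p) ++ [t], 1 ≤ y := by
      intro y hy
      rcases List.mem_append.1 hy with h | h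
      · have := hW y (List.mem_of_mem_drop (List.mem_of_mem_take h)); omega
      · simp only [List.mem_singleton] at h; subst h; exact ht1
    have hLlen : 2 ≤ ((l.drop p).take (q - p) ++ [t]).length := by
      rw [List.length_append]
      have : (l.drop p).take (q - p) ≠ [] := hsegne
      have h0 : 1 ≤ ((l.drop p).take (q - p)).length := by
        rcases Nat.eq_zero_or_pos ((l.drop p).take (q - p)).length with h | h
        · exact absurd (List.length_eq_zero_iff.mp h) hsegne
        · exact h
      simp only [List.length_singleton]
      omega
    have hLsum : ((l.drop p).take (q - p) ++ [t]).sum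
        = ((l.drop p).take (q - p)).sum + t := by
      rw [List.sum_append]; simp
    have hge := aux_e2_ge' _ hLel hLlen
    constructor
    · intro hsipEq
      have hx0 : x = 0 := by omega
      refine ⟨by rw [hhead]; omega, ?_⟩
      rw [hDI, hhead]
      have hZ : (i1 : ℤ) - 1 ≤ e2 (x :: ((l.drop p).take (q - p) ++ [t])) := by
        rw [aux_e2_cons, hx0, Nat.cast_zero, zero_mul, zero_add]
        have hsum2 : ((l.drop p).take (q - p) ++ [t]).sum = i1 := by rw [hLsum]; omega
        rw [hsum2] at hge
        exact hge
      have hZ' : (i1 : ℝ) - 1 ≤ ((e2 (x :: ((l.drop p).take (q - p) ++ [t])) : ℤ) : ℝ) := by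
        exact_mod_cast hZ
      have hx0' : (x : ℝ) = 0 := by rw [hx0]; simp
      linarith only [hZ', hx0']
    · intro hsipNe
      have hx1 : 1 ≤ x := by omega
      have hi14 : 4 ≤ i1 := by omega
      refine ⟨by rw [hhead]; omega, ?_⟩
      rw [hDI, hhead]
      have hZ : (x : ℤ) + 4 ≤ e2 (x :: ((l.drop p).take (q - p) ++ [t])) := by
        rw [aux_e2_cons]
        have hS : (3:ℤ) ≤ (((l.drop p).take (q - p) ++ [t]).sum : ℤ) := by
          have h3 : 3 ≤ ((l.drop p).take (q - p) ++ [t]).sum := by rw [hLsum]; omega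
          exact_mod_cast h3
        have hx1' : (1:ℤ) ≤ (x:ℤ) := by exact_mod_cast hx1
        have hmul : (0:ℤ) ≤ ((x:ℤ) - 1) * ((((l.drop p).take (q - p) ++ [t]).sum : ℤ) - 3) :=
          mul_nonneg (by linarith only [hx1']) (by linarith only [hS])
        linarith only [hmul, hge, hS, hx1']
      have hZ' : (x : ℝ) + 4 ≤ ((e2 (x :: ((l.drop p).take (q - p) ++ [t])) : ℤ) : ℝ) := by
        exact_mod_cast hZ
      linarith only [hZ']
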